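/- The polynomials a0, Δ, β are algebraically independent over F, and the localization of R = F[a0, Δ, β, γ_0] at a0 satisfies R[a0^{−1}] = F[a0, a0^{−1}][Δ, β]; in particular γ_0 lies in the subring F[a0, a0^{−1}][Δ, β] of F[V][a0^{−1}]. -/

import Mathlib

open Finset in
/-- `∏ (X - C a) = X^q - X` over a finite field. -/
lemma FF.prod_X_sub_C (K : Type*) [Field K] [Fintype K] :
    ∏ a : K, (Polynomial.X - Polynomial.C a) = Polynomial.X ^ (Fintype.card K) - Polynomial.X := by
  classical
  have hlt : 1 < Fintype.card K := Fintype.one_lt_card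
  have hm : (Polynomial.X ^ (Fintype.card K) - Polynomial.X : Polynomial K).Monic := by
    obtain ⟨m, hm⟩ : ∃ m, Fintype.card K = m + 1 := ⟨Fintype.card K - 1, by omega⟩
    rw [hm]
    apply Polynomial.monic_X_pow_sub
    rw [Polynomial.degree_X]
    exact_mod_cast (by omega : 1 < m + 1)
  have hroots := FiniteField.roots_X_pow_card_sub_X K
  have hcard : (Polynomial.X ^ (Fintype.card K) - Polynomial.X : Polynomial K).roots.card
      = (Polynomial.X ^ (Fintype.card K) - Polynomial.X : Polynomial K).natDegree := by
    rw [hroots, FiniteField.X_pow_card_sub_X_natDegree_eq K hlt]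
    simp
  have := Polynomial.prod_multiset_X_sub_C_of_monic_of_roots_card_eq hm hcard
  rw [hroots] at this
  rw [← this]
  rfl


lemma FF.prod_sub {K Ω : Type*} [Field K] [Fintype K] [Field Ω] (φ : K →+* Ω) (w : Ω) :
    ∏ a : K, (w - φ a) = w ^ (Fintype.card K) - w := by
  classical
  have h := congrArg (Polynomial.eval₂RingHom φ w) (FF.prod_X_sub_C K)
  simp only [map_prod, map_sub, map_pow, Polynomial.coe_eval₂RingHom, Polynomial.eval₂_X,
    Polynomial.eval₂_C] at h
  exact h

lemma FF.prod_linear {K Ω : Type*} [Field K] [Fintype K] [Field Ω] (φ : K →+* Ω)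
    {q : ℕ} (hq : Fintype.card K = q) (hq1 : 1 < q) (z t : Ω) :
    ∏ c : K, (z + φ c * t) = z ^ q - t ^ (q - 1) * z := by
  classical
  subst hq
  rcases eq_or_ne t 0 with rfl | ht
  · simp [zero_pow (by omega : Fintype.card K - 1 ≠ 0)]
  · have h1 : ∀ c : K, z + φ c * t = t * (z / t - φ (-c)) := by
      intro c; rw [map_neg]; field_simp; ring
    rw [Finset.prod_congr rfl fun c _ => h1 c, Finset.prod_mul_distrib, Finset.prod_const,
      Finset.card_univ]
    rw [show (∏ c : K, (z / t - φ (-c))) = ∏ c : K, (z / t - φ c) from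
      Fintype.prod_equiv (Equiv.neg K) _ _ (fun c => by simp)]
    rw [FF.prod_sub φ (z / t)]
    have htq : (t : Ω) ^ Fintype.card K = t ^ (Fintype.card K - 1) * t := by
      rw [← pow_succ]; congr 1; omega
    rw [div_pow, mul_sub, mul_div_cancel₀ _ (pow_ne_zero _ ht)]
    congr 1
    rw [htq, mul_assoc, mul_comm t (z / t), div_mul_cancel₀ _ ht]


open MvPolynomial

lemma core_indep (F : Type*) [Field F] (q : ℕ) (hq1 : 1 < q) :
    AlgebraicIndependent F
      ![(X 0 : MvPolynomial (Fin 3) F), X 2, X 1 ^ q - X 0 ^ (q - 1) * X 1] := by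
  classical
  set g : MvPolynomial (Fin 3) F := X 1 ^ q - X 0 ^ (q - 1) * X 1 with hg
  set D := MvPolynomial (Fin 2) F
  let e : MvPolynomial (Fin 3) F ≃ₐ[F] Polynomial D :=
    (renameEquiv F (Equiv.swap 0 1)).trans (finSuccEquiv F 2)
  have h10 : (1 : Fin 3) = (0 : Fin 2).succ := rfl
  have h21 : (2 : Fin 3) = (1 : Fin 2).succ := rfl
  have he0 : e (X 0) = Polynomial.C (X 0) := by
    show finSuccEquiv F 2 (rename (Equiv.swap 0 1) (X 0)) = _
    rw [rename_X, Equiv.swap_apply_left, h10, finSuccEquiv_X_succ]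
  have he1 : e (X 1) = Polynomial.X := by
    show finSuccEquiv F 2 (rename (Equiv.swap 0 1) (X 1)) = _
    rw [rename_X, Equiv.swap_apply_right, finSuccEquiv_X_zero]
  have he2 : e (X 2) = Polynomial.C (X 1) := by
    show finSuccEquiv F 2 (rename (Equiv.swap 0 1) (X 2)) = _
    rw [rename_X, Equiv.swap_apply_of_ne_of_ne (by decide) (by decide), h21, finSuccEquiv_X_succ]
  have heg : e g = Polynomial.X ^ q - Polynomial.C (X 0 ^ (q - 1)) * Polynomial.X := by
    rw [hg, map_sub, map_mul, map_pow, map_pow, he0, he1, map_pow]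
  -- `e g` is transcendental over `D`
  have hmonic : (Polynomial.X ^ q - Polynomial.C ((X 0 : D) ^ (q - 1)) * Polynomial.X).Monic := by
    apply Polynomial.monic_X_pow_sub
    calc (Polynomial.C ((X 0 : D) ^ (q - 1)) * Polynomial.X).degree
        ≤ 0 + 1 := (Polynomial.degree_mul_le _ _).trans
          (add_le_add Polynomial.degree_C_le Polynomial.degree_X_le)
      _ < (q : WithBot ℕ) := by exact_mod_cast (by omega : 0 + 1 < q)
  have hdeg : (Polynomial.X ^ q - Polynomial.C ((X 0 : D) ^ (q - 1)) * Polynomial.X).natDegree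
      = q := by
    compute_degree!
    all_goals first
      | omega
      | (rw [if_neg (show ¬q = 1 by omega)]; norm_num)
  have htrans : Transcendental D (e g) := by
    rw [heg]
    apply Polynomial.transcendental
    · rw [hdeg]; omega
    · rw [hmonic.leadingCoeff]; exact one_mem _
  have hH : Function.Injective (Polynomial.aeval (e g) : Polynomial D →ₐ[D] Polynomial D) :=
    transcendental_iff_injective.mp htrans
  -- the substitution endomorphism
  let h : MvPolynomial (Fin 3) F →ₐ[F] MvPolynomial (Fin 3) F := aeval ![X 0, g, X 2]
  have hcomm_i : ∀ i, e ((aeval (R := F) ![X 0, g, X 2]) (X i)) = Polynomial.aeval (e g) (e (X i)) := by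
    intro i
    fin_cases i
    · show e ((aeval (R := F) ![X 0, g, X 2]) (X 0)) = Polynomial.aeval (e g) (e (X 0))
      rw [aeval_X, show (![(X 0 : MvPolynomial (Fin 3) F), g, X 2]) 0 = X 0 from rfl, he0,
        Polynomial.aeval_C, Polynomial.algebraMap_eq]
    · show e ((aeval (R := F) ![X 0, g, X 2]) (X 1)) = Polynomial.aeval (e g) (e (X 1))
      rw [aeval_X, show (![(X 0 : MvPolynomial (Fin 3) F), g, X 2]) 1 = g from rfl, he1,
        Polynomial.aeval_X]
    · show e ((aeval (R := F) ![X 0, g, X 2]) (X 2)) = Polynomial.aeval (e g) (e (X 2))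
      rw [aeval_X, show (![(X 0 : MvPolynomial (Fin 3) F), g, X 2]) 2 = X 2 from rfl, he2,
        Polynomial.aeval_C, Polynomial.algebraMap_eq]
  have hcomm : e.toAlgHom.comp h
      = ((Polynomial.aeval (e g)).restrictScalars F).comp e.toAlgHom := by
    apply algHom_ext
    intro i
    simp only [AlgHom.comp_apply, AlgEquiv.toAlgHom_eq_coe, AlgHom.coe_coe,
      AlgHom.coe_restrictScalars']
    exact hcomm_i i
  have hinj : Function.Injective h := by
    intro P Q hPQ
    have : Polynomial.aeval (e g) (e P) = Polynomial.aeval (e g) (e Q) := by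
      have h1 := congrArg e.toAlgHom.toRingHom.toFun (congrArg h.toRingHom.toFun rfl : h P = h P)
      calc Polynomial.aeval (e g) (e P) = e (h P) := (AlgHom.congr_fun hcomm P).symm
        _ = e (h Q) := by rw [hPQ]
        _ = _ := AlgHom.congr_fun hcomm Q
    exact e.injective (hH this)
  have base := (MvPolynomial.algebraicIndependent_X (Fin 3) F).map' (f := h) hinj
  have base2 : AlgebraicIndependent F ![(X 0 : MvPolynomial (Fin 3) F), g, X 2] := by
    have hfam : (⇑h ∘ fun i => (X i : MvPolynomial (Fin 3) F)) = ![X 0, g, X 2] := by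
      funext i
      fin_cases i <;> simp [h, aeval_X]
    rwa [hfam] at base
  have final := base2.comp (Equiv.swap 1 2) (Equiv.injective _)
  have hfam2 : (![(X 0 : MvPolynomial (Fin 3) F), g, X 2] ∘ ⇑(Equiv.swap (1 : Fin 3) 2))
      = ![X 0, X 2, g] := by
    funext i
    fin_cases i <;> simp [Equiv.swap_apply_def] <;> rfl
  rwa [hfam2] at final


open MvPolynomial

set_option maxHeartbeats 1000000 in
/-- `a0, Δ, β` are algebraically independent over `F`, and in the localization
`F[V][a0⁻¹]`, the subring `R[a0⁻¹]` generated by `F`, `a0`, `a0⁻¹`, `Δ`, `β`, `γ₀` coincides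
with `F[a0, a0⁻¹][Δ, β]`; in particular `γ₀ ∈ F[a0, a0⁻¹][Δ, β]`. -/
theorem localization_at_a0 (F : Type*) [Field F] (p n q : ℕ) (hp : p.Prime) (hp2 : p ≠ 2)
    [CharP F p] (hn : n ≠ 0) (hq : q = p ^ n)
    (Fq : Type*) [Field Fq] [Fintype Fq] [Algebra Fq F] (hcard : Fintype.card Fq = q)
    (Δ β γ₀ : MvPolynomial (Fin 3) F)
    (hΔ : Δ = X 1 ^ 2 - X 0 * X 2)
    (hβ : β = ∏ c : Fq, (X 1 + C (algebraMap Fq F c) * X 0))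
    (hγ : γ₀ = ∏ c : Fq,
      (X 2 + C (2 * algebraMap Fq F c) * X 1 + C ((algebraMap Fq F c) ^ 2) * X 0)) :
    AlgebraicIndependent F ![(X 0 : MvPolynomial (Fin 3) F), Δ, β] ∧
    (let L := Localization.Away (X 0 : MvPolynomial (Fin 3) F)
     let ι := algebraMap (MvPolynomial (Fin 3) F) L
     let u : L := IsLocalization.Away.invSelf (X 0 : MvPolynomial (Fin 3) F)
     let constants : Set L := Set.range (ι.comp (C : F →+* MvPolynomial (Fin 3) F))
     Subring.closure (constants ∪ {ι (X 0), u, ι Δ, ι β, ι γ₀}) =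
       Subring.closure (constants ∪ {ι (X 0), u, ι Δ, ι β}) ∧
     ι γ₀ ∈ Subring.closure (constants ∪ {ι (X 0), u, ι Δ, ι β})) := by
  classical
  haveI : Fact p.Prime := ⟨hp⟩
  have hq1 : 1 < q := by
    rw [hq]; exact Nat.one_lt_pow hn hp.one_lt
  have hqodd : Odd q := by
    rw [hq]; exact (hp.odd_of_ne_two hp2).pow
  -- ambient algebraically closed field
  let K := FractionRing (MvPolynomial (Fin 3) F)
  let Ω := AlgebraicClosure K
  let em : MvPolynomial (Fin 3) F →+* Ω :=
    (algebraMap K Ω).comp (algebraMap (MvPolynomial (Fin 3) F) K)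
  have hem : Function.Injective em :=
    (algebraMap K Ω).injective.comp (IsFractionRing.injective _ _)
  let φ : Fq →+* Ω := em.comp ((C : F →+* MvPolynomial (Fin 3) F).comp (algebraMap Fq F))
  have hφ : ∀ c : Fq, em (C (algebraMap Fq F c)) = φ c := fun c => rfl
  haveI : CharP Ω p :=
    charP_of_injective_ringHom (f := em.comp (C : F →+* MvPolynomial (Fin 3) F))
      (hem.comp (C_injective _ _)) p
  have hfrob_sub : ∀ x y : Ω, (x - y) ^ q = x ^ q - y ^ q := fun x y => by
    rw [hq]; exact sub_pow_char_pow x y n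
  have hfrob_add : ∀ x y : Ω, (x + y) ^ q = x ^ q + y ^ q := fun x y => by
    rw [hq]; exact add_pow_char_pow x y p n
  -- closed form of β
  have hβ' : β = X 1 ^ q - X 0 ^ (q - 1) * X 1 := by
    apply hem
    rw [hβ, map_prod, map_sub, map_mul, map_pow, map_pow]
    rw [Finset.prod_congr rfl (fun c _ => by
      rw [map_add, map_mul, hφ] :
      ∀ c ∈ Finset.univ, em (X 1 + C (algebraMap Fq F c) * X 0) = em (X 1) + φ c * em (X 0))]
    exact FF.prod_linear φ hcard hq1 _ _
  -- key identity
  have key : (X 0 : MvPolynomial (Fin 3) F) ^ q * γ₀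
      = β ^ 2 - Δ ^ q + 2 * X 0 ^ (q - 1) * Δ ^ ((q + 1) / 2) - (X 0 ^ (q - 1)) ^ 2 * Δ := by
    obtain ⟨s, hs⟩ := IsAlgClosed.exists_pow_nat_eq (k := Ω) (em Δ) (n := 2) two_pos
    apply hem
    have hfac : ∀ c : Fq, (X 0 : MvPolynomial (Fin 3) F) *
        (X 2 + C (2 * algebraMap Fq F c) * X 1 + C ((algebraMap Fq F c) ^ 2) * X 0)
        = (X 1 + C (algebraMap Fq F c) * X 0) ^ 2 - Δ := by
      intro c
      rw [hΔ, map_mul, map_pow, map_ofNat]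
      ring
    have hLHS : (X 0 : MvPolynomial (Fin 3) F) ^ q * γ₀
        = ∏ c : Fq, ((X 1 + C (algebraMap Fq F c) * X 0) ^ 2 - Δ) := by
      rw [hγ, ← Finset.prod_congr rfl fun c _ => hfac c, Finset.prod_mul_distrib,
        Finset.prod_const, Finset.card_univ, hcard]
    rw [hLHS, map_prod]
    have hstep : ∀ c : Fq, em ((X 1 + C (algebraMap Fq F c) * X 0) ^ 2 - Δ)
        = ((em (X 1) - s) + φ c * em (X 0)) * ((em (X 1) + s) + φ c * em (X 0)) := by
      intro c
      rw [map_sub, map_pow, map_add, map_mul, hφ, ← hs]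
      ring
    rw [Finset.prod_congr rfl fun c _ => hstep c, Finset.prod_mul_distrib,
      FF.prod_linear φ hcard hq1, FF.prod_linear φ hcard hq1, hfrob_sub, hfrob_add, hβ']
    simp only [map_sub, map_add, map_mul, map_pow, map_ofNat]
    rw [← hs]
    obtain ⟨j, hj⟩ := hqodd
    have e1 : q - 1 = 2 * j := by omega
    have e2 : (q + 1) / 2 = j + 1 := by omega
    rw [e1, e2, hj]
    ring
  constructor
  · -- algebraic independence
    have hXne : (X 0 : MvPolynomial (Fin 3) F) ≠ 0 := X_ne_zero 0
    let L₀ := Localization.Away (X 0 : MvPolynomial (Fin 3) F)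
    have hinjL : Function.Injective (algebraMap (MvPolynomial (Fin 3) F) L₀) :=
      IsLocalization.injective _ (powers_le_nonZeroDivisors_of_noZeroDivisors hXne)
    let a : Fin 3 → L₀ := fun i => algebraMap (MvPolynomial (Fin 3) F) L₀ (X i)
    let u₀ : L₀ := IsLocalization.Away.invSelf (S := L₀) (X 0 : MvPolynomial (Fin 3) F)
    have hu₀ : a 0 * u₀ = 1 :=
      IsLocalization.Away.mul_invSelf (S := L₀) (X 0 : MvPolynomial (Fin 3) F)
    let Λ : MvPolynomial (Fin 3) F →ₐ[F] L₀ := aeval ![a 0, a 1, (a 1 ^ 2 - a 2) * u₀]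
    apply AlgebraicIndependent.of_comp Λ
    have core' : AlgebraicIndependent F ![(X 0 : MvPolynomial (Fin 3) F), X 2, β] := by
      rw [hβ']; exact core_indep F q hq1
    have hfam : ⇑Λ ∘ ![(X 0 : MvPolynomial (Fin 3) F), Δ, β]
        = ⇑(IsScalarTower.toAlgHom F (MvPolynomial (Fin 3) F) L₀)
          ∘ ![(X 0 : MvPolynomial (Fin 3) F), X 2, β] := by
      funext i
      fin_cases i
      · show (aeval (R := F) ![a 0, a 1, (a 1 ^ 2 - a 2) * u₀]) (X 0) = a 0
        rw [aeval_X]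
        simp
      · show (aeval (R := F) ![a 0, a 1, (a 1 ^ 2 - a 2) * u₀]) Δ = a 2
        rw [hΔ, map_sub, map_pow, map_mul, aeval_X, aeval_X, aeval_X]
        show a 1 ^ 2 - a 0 * ((a 1 ^ 2 - a 2) * u₀) = a 2
        rw [mul_left_comm, hu₀, mul_one]
        ring
      · show (aeval (R := F) ![a 0, a 1, (a 1 ^ 2 - a 2) * u₀]) β
            = algebraMap (MvPolynomial (Fin 3) F) L₀ β
        rw [hβ, map_prod, map_prod]
        refine Finset.prod_congr rfl fun c _ => ?_
        rw [map_add, map_mul, aeval_X, aeval_X, aeval_C]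
        show a 1 + algebraMap F L₀ (algebraMap Fq F c) * a 0
            = algebraMap (MvPolynomial (Fin 3) F) L₀ (X 1 + C (algebraMap Fq F c) * X 0)
        rw [map_add, map_mul, IsScalarTower.algebraMap_apply F (MvPolynomial (Fin 3) F) L₀]
        simp only [MvPolynomial.algebraMap_eq]
        rfl
    rw [hfam]
    exact core'.map' (by rw [IsScalarTower.coe_toAlgHom']; exact hinjL)
  · intro L ι u constants
    have hι0 : ι (X 0) * u = 1 := IsLocalization.Away.mul_invSelf _
    have hmem : ι γ₀ ∈ Subring.closure (constants ∪ {ι (X 0), u, ι Δ, ι β}) := by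
      set S := Subring.closure (constants ∪ {ι (X 0), u, ι Δ, ι β}) with hS
      have hx0 : ι (X 0) ∈ S := Subring.subset_closure (Set.mem_union_right _ (by simp))
      have hu : u ∈ S := Subring.subset_closure (Set.mem_union_right _ (by simp))
      have hΔm : ι Δ ∈ S := Subring.subset_closure (Set.mem_union_right _ (by simp))
      have hβm : ι β ∈ S := Subring.subset_closure (Set.mem_union_right _ (by simp))
      have h2S : (2 : L) ∈ S := by
        exact_mod_cast natCast_mem S 2
      have hγid : ι γ₀ = u ^ q * ι ((X 0 : MvPolynomial (Fin 3) F) ^ q * γ₀) := by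
        rw [map_mul, map_pow, ← mul_assoc, ← mul_pow, mul_comm u (ι (X 0)), hι0, one_pow,
          one_mul]
      rw [hγid, key]
      simp only [map_sub, map_add, map_mul, map_pow, map_ofNat]
      exact mul_mem (pow_mem hu q)
        (sub_mem (add_mem (sub_mem (pow_mem hβm 2) (pow_mem hΔm q))
          (mul_mem (mul_mem h2S (pow_mem hx0 _)) (pow_mem hΔm _)))
          (mul_mem (pow_mem (pow_mem hx0 _) 2) hΔm))
    refine ⟨?_, hmem⟩
    apply le_antisymm
    · rw [Subring.closure_le]
      rintro x (hx | hx)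
      · exact Subring.subset_closure (Set.mem_union_left _ hx)
      · simp only [Set.mem_insert_iff, Set.mem_singleton_iff] at hx
        rcases hx with rfl | rfl | rfl | rfl | rfl
        · exact Subring.subset_closure (Set.mem_union_right _ (by simp))
        · exact Subring.subset_closure (Set.mem_union_right _ (by simp))
        · exact Subring.subset_closure (Set.mem_union_right _ (by simp))
        · exact Subring.subset_closure (Set.mem_union_right _ (by simp))
        · exact hmem
    · apply Subring.closure_mono
      apply Set.union_subset_union_right
      intro x hx
      simp only [Set.mem_insert_iff, Set.mem_singleton_iff] at hx ⊢
      tauto
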